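/- Let g and h be binary morphisms A* → Σ*, and let g be marked. Consider the set B of all words e ∈ A⁺ satisfying z_h·g(e) = h(e)·z_h and minimal with this property (i.e., whenever e₁ is a prefix of e and z_h·g(e₁) = h(e₁)·z_h, then e₁ = ε or e₁ = e). Then B has at most two elements, and if B = {e, e'} with e ≠ e', then the first letter of e differs from the first letter of e'. -/

import Mathlib

/-- The two-letter alphabet `A = {a, b}`. -/
inductive Ltr : Type
  | a : Ltr
  | b : Ltr
  deriving DecidableEq

/-- Apply a morphism (given by the images of the letters) to a word. -/
def mapp {α σ : Type*} (g : α → List σ) (w : List α) : List σ :=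
  (w.map g).flatten

/-- The `n`-th power `tⁿ` of a word `t`. -/
def npow {σ : Type*} (t : List σ) (n : ℕ) : List σ :=
  (List.replicate n t).flatten

/-- A binary morphism is periodic if all images of letters are powers of a common word. -/
def Periodic {σ : Type*} (g : Ltr → List σ) : Prop :=
  ∃ t : List σ, ∀ x : Ltr, ∃ n : ℕ, g x = npow t n

/-- The equality set `E(g,h)`. -/
def EqSet {σ : Type*} (g h : Ltr → List σ) : Set (List Ltr) :=
  {u | mapp g u = mapp h u}

/-- `u` is a minimal element of `E(g,h)`: nonempty, in `E(g,h)`, and not a product of two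
nonempty elements of `E(g,h)`. -/
def MinEl {σ : Type*} (g h : Ltr → List σ) (u : List Ltr) : Prop :=
  u ≠ [] ∧ u ∈ EqSet g h ∧
    ∀ v w : List Ltr, v ≠ [] → w ≠ [] → v ∈ EqSet g h → w ∈ EqSet g h → u ≠ v ++ w

/-- The submonoid of the free monoid generated by a set `S` of words. -/
def gen {α : Type*} (S : Set (List α)) : Set (List α) :=
  {u | ∃ l : List (List α), (∀ v ∈ l, v ∈ S) ∧ u = l.flatten}

/-- A binary morphism is marked if the images of the two letters are nonempty and
begin with different letters. -/
def Marked {σ : Type*} (g : Ltr → List σ) : Prop :=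
  g Ltr.a ≠ [] ∧ g Ltr.b ≠ [] ∧ (g Ltr.a).head? ≠ (g Ltr.b).head?

open Classical in
/-- Longest common prefix of two words. -/
noncomputable def lcp {σ : Type*} : List σ → List σ → List σ
  | x :: xs, y :: ys => if x = y then x :: lcp xs ys else []
  | _, _ => []

/-- `z_h`: the longest common prefix of `h(ab)` and `h(ba)`. -/
noncomputable def zh {σ : Type*} (h : Ltr → List σ) : List σ :=
  lcp (h Ltr.a ++ h Ltr.b) (h Ltr.b ++ h Ltr.a)

/-- `z̄_h`: the longest common suffix of `h(ab)` and `h(ba)`. -/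
noncomputable def zbar {σ : Type*} (h : Ltr → List σ) : List σ :=
  (lcp (h Ltr.a ++ h Ltr.b).reverse ((h Ltr.b ++ h Ltr.a).reverse)).reverse

/-- Componentwise concatenation in `Δ* × Δ*`. -/
def pprod {α : Type*} (p q : List α × List α) : List α × List α :=
  (p.1 ++ q.1, p.2 ++ q.2)

/-- The coincidence set `I(g,h) = {(u,v) | g(u) = h(v)}`. -/
def CoinSet {α σ : Type*} (g h : α → List σ) : Set (List α × List α) :=
  {p | mapp g p.1 = mapp h p.2}

/-- Minimal elements of the coincidence set: elements other than `(ε,ε)` that are not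
a product of two elements of `I(g,h) \ {(ε,ε)}`. -/
def MinCoin {α σ : Type*} (g h : α → List σ) (p : List α × List α) : Prop :=
  p ≠ ([], []) ∧ p ∈ CoinSet g h ∧
    ¬ ∃ q r : List α × List α, q ≠ ([], []) ∧ r ≠ ([], []) ∧
      q ∈ CoinSet g h ∧ r ∈ CoinSet g h ∧ p = pprod q r

/-- `(e,f)` is a block of `(g,h)`: nonempty words with `z_h·g(e) = h(f)·z_h`, minimal
with this property. -/
def MinBlock {σ : Type*} (g h : Ltr → List σ) (e f : List Ltr) : Prop :=
  e ≠ [] ∧ f ≠ [] ∧ zh h ++ mapp g e = mapp h f ++ zh h ∧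
    ∀ u v : List Ltr, u <+: e → v <+: f →
      zh h ++ mapp g u = mapp h v ++ zh h → (u = [] ∧ v = []) ∨ (u = e ∧ v = f)

/-- `e` is a nonempty word with `z_h·g(e) = h(e)·z_h`, minimal with this property. -/
def MinEqBlock {σ : Type*} (g h : Ltr → List σ) (e : List Ltr) : Prop :=
  e ≠ [] ∧ zh h ++ mapp g e = mapp h e ++ zh h ∧
    ∀ e₁ : List Ltr, e₁ <+: e → zh h ++ mapp g e₁ = mapp h e₁ ++ zh h →
      e₁ = [] ∨ e₁ = e

/-- The binary morphism sending `a ↦ x` and `b ↦ y`. -/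
def two {σ : Type*} (x y : List σ) : Ltr → List σ
  | Ltr.a => x
  | Ltr.b => y

/-- A counterexample: the minimal generating set of `E(g,h)` has at least two elements,
`g` is marked, `h` is not marked, `|g(a)| > |h(a)|` and `|g(b)| < |h(b)|`. -/
def Counterexample {σ : Type*} (g h : Ltr → List σ) : Prop :=
  (∃ α β : List Ltr, MinEl g h α ∧ MinEl g h β ∧ α ≠ β) ∧
  Marked g ∧ ¬ Marked h ∧
  (h Ltr.a).length < (g Ltr.a).length ∧ (g Ltr.b).length < (h Ltr.b).length

section LcpBasics
variable {σ : Type*}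

lemma lcp_nil_left (v : List σ) : lcp ([] : List σ) v = [] := by
  cases v <;> rfl

lemma lcp_nil_right (u : List σ) : lcp u ([] : List σ) = [] := by
  cases u <;> rfl

lemma lcp_cons_eq (x : σ) (xs ys : List σ) :
    lcp (x :: xs) (x :: ys) = x :: lcp xs ys := by
  rw [lcp]; exact if_pos rfl

lemma lcp_cons_ne {x y : σ} (h : x ≠ y) (xs ys : List σ) :
    lcp (x :: xs) (y :: ys) = [] := by
  rw [lcp]; exact if_neg h

lemma lcp_comm (u v : List σ) : lcp u v = lcp v u := by
  induction u generalizing v with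
  | nil => rw [lcp_nil_left, lcp_nil_right]
  | cons x xs ih =>
    cases v with
    | nil => rw [lcp_nil_left, lcp_nil_right]
    | cons y ys =>
      by_cases hxy : x = y
      · subst hxy; rw [lcp_cons_eq, lcp_cons_eq, ih]
      · rw [lcp_cons_ne hxy, lcp_cons_ne (fun hh => hxy hh.symm)]

lemma lcp_prefix_left (u v : List σ) : lcp u v <+: u := by
  induction u generalizing v with
  | nil => rw [lcp_nil_left]
  | cons x xs ih =>
    cases v with
    | nil => rw [lcp_nil_right]; exact List.nil_prefix
    | cons y ys =>
      by_cases hxy : x = y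
      · subst hxy; rw [lcp_cons_eq]; exact List.cons_prefix_cons.mpr ⟨rfl, ih ys⟩
      · rw [lcp_cons_ne hxy]; exact List.nil_prefix

lemma lcp_prefix_right (u v : List σ) : lcp u v <+: v := by
  rw [lcp_comm]; exact lcp_prefix_left v u

lemma prefix_lcp {c u v : List σ} (hu : c <+: u) (hv : c <+: v) : c <+: lcp u v := by
  induction c generalizing u v with
  | nil => exact List.nil_prefix
  | cons x xs ih =>
    cases u with
    | nil => exact absurd (List.eq_nil_of_prefix_nil hu) (by simp)
    | cons a as =>
      cases v with
      | nil => exact absurd (List.eq_nil_of_prefix_nil hv) (by simp)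
      | cons b bs =>
        obtain ⟨rfl, hu'⟩ := List.cons_prefix_cons.mp hu
        obtain ⟨rfl, hv'⟩ := List.cons_prefix_cons.mp hv
        rw [lcp_cons_eq]
        exact List.cons_prefix_cons.mpr ⟨rfl, ih hu' hv'⟩

lemma lcp_self (u : List σ) : lcp u u = u :=
  (lcp_prefix_left u u).eq_of_length
    (Nat.le_antisymm (List.IsPrefix.length_le (lcp_prefix_left u u))
      (List.IsPrefix.length_le (prefix_lcp (List.prefix_refl u) (List.prefix_refl u))))

lemma lcp_getElem?_ne {u v : List σ} (hu : (lcp u v).length < u.length)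
    (hv : (lcp u v).length < v.length) :
    u[(lcp u v).length]? ≠ v[(lcp u v).length]? := by
  induction u generalizing v with
  | nil => simp at hu
  | cons x xs ih =>
    cases v with
    | nil => simp at hv
    | cons y ys =>
      by_cases hxy : x = y
      · subst hxy
        rw [lcp_cons_eq] at hu hv ⊢
        simp only [List.length_cons, Nat.add_lt_add_iff_right] at hu hv
        simpa using ih hu hv
      · rw [lcp_cons_ne hxy] at hu hv ⊢
        simpa using hxy

end LcpBasics
section Key
variable {σ : Type*}

lemma pref_cancel {A u v : List σ} : A ++ u <+: A ++ v ↔ u <+: v := by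
  constructor
  · rintro ⟨t, ht⟩
    rw [List.append_assoc] at ht
    exact ⟨t, List.append_cancel_left ht⟩
  · rintro ⟨t, ht⟩
    exact ⟨t, by rw [List.append_assoc, ht]⟩

lemma prefix_eq_of_length {u v l : List σ} (hu : u <+: l) (hv : v <+: l)
    (hl : u.length = v.length) : u = v :=
  (List.prefix_of_prefix_length_le hu hv hl.le).eq_of_length hl

/-- If `u <+: v ++ w` and `|u| ≤ |v|` then `u <+: v`. -/
lemma prefix_of_prefix_append {u v w : List σ} (h : u <+: v ++ w)
    (hl : u.length ≤ v.length) : u <+: v :=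
  List.prefix_of_prefix_length_le h (List.prefix_append v w) hl

/-- Two prefixes of a common word, with a length trick:
if `u <+: l` and `v <+: l` and `|u| ≤ |v|` then `u <+: v`. -/
lemma key1 : ∀ n (A B : List σ), A.length + B.length ≤ n →
    lcp (A ++ B) (B ++ A) <+: A ++ lcp (A ++ B) (B ++ A) := by
  intro n
  induction n with
  | zero =>
    intro A B hn
    have hA : A = [] := by
      cases A with | nil => rfl | cons _ _ => simp at hn
    subst hA; simp
  | succ n ih =>
    intro A B hn
    set z := lcp (A ++ B) (B ++ A) with hz
    have hz1 : z <+: A ++ B := lcp_prefix_left _ _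
    have hz2 : z <+: B ++ A := lcp_prefix_right _ _
    rcases le_or_gt z.length A.length with hzA | hzA
    · exact (prefix_of_prefix_append hz1 hzA).trans (List.prefix_append A z)
    have hAz : A <+: z := List.prefix_of_prefix_length_le (List.prefix_append A B) hz1 hzA.le
    obtain ⟨r, hr⟩ := hAz
    have goalred : r <+: A ++ r → z <+: A ++ z := by
      intro hgr
      rw [← hr]
      exact pref_cancel.mpr hgr
    rcases le_or_gt z.length B.length with hzB | hzB
    · -- z <+: B
      have hzB' : z <+: B := prefix_of_prefix_append hz2 hzB
      obtain ⟨m, hm⟩ := hzB'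
      apply goalred
      have hB : B = A ++ (r ++ m) := by rw [← hm, ← hr, List.append_assoc]
      have h1 : A ++ r <+: A ++ (A ++ (r ++ m)) := by rw [hr, ← hB]; exact hz1
      have h2 : r <+: A ++ (r ++ m) := pref_cancel.mp h1
      rw [← List.append_assoc] at h2
      exact prefix_of_prefix_append h2 (by simp)
    have hBz : B <+: z := List.prefix_of_prefix_length_le (List.prefix_append B A) hz2 hzB.le
    rcases eq_or_ne A ([] : List σ) with rfl | hAne
    · simp
    rcases eq_or_ne B ([] : List σ) with rfl | hBne
    · have hzA' : z = A := by rw [hz]; simp [lcp_self]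
      rw [hzA']; exact List.prefix_append A A
    have hAlen : 1 ≤ A.length := List.length_pos_iff.mpr hAne
    have hBlen : 1 ≤ B.length := List.length_pos_iff.mpr hBne
    rcases le_or_gt A.length B.length with hAB | hAB
    · -- A <+: B
      have hApB : A <+: B := List.prefix_of_prefix_length_le ⟨r, hr⟩ hBz hAB
      obtain ⟨B', hB'⟩ := hApB
      have hr1 : r <+: A ++ B' := by
        apply (pref_cancel (A := A)).mp
        rw [hr, hB']
        exact hz1
      have hr2 : r <+: B' ++ A := by
        apply (pref_cancel (A := A)).mp
        rw [hr]
        have : B ++ A = A ++ (B' ++ A) := by rw [← hB', List.append_assoc]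
        rw [← this]
        exact hz2
      set z' := lcp (A ++ B') (B' ++ A) with hz'
      have hrz' : r <+: z' := prefix_lcp hr1 hr2
      have hIH : z' <+: A ++ z' := by
        apply ih
        have : B'.length + A.length = B.length := by
          rw [← hB']; simp [Nat.add_comm]
        omega
      apply goalred
      have h3 : r <+: A ++ z' := hrz'.trans hIH
      have h4 : A ++ r <+: A ++ z' := pref_cancel.mpr hrz'
      exact List.prefix_of_prefix_length_le h3 h4 (by simp)
    · -- B <+: A
      have hBpA : B <+: A := List.prefix_of_prefix_length_le hBz ⟨r, hr⟩ hAB.le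
      obtain ⟨A', hA'⟩ := hBpA
      obtain ⟨z₂, hz₂⟩ := hBz
      have h1 : z₂ <+: A' ++ B := by
        apply (pref_cancel (A := B)).mp
        rw [hz₂]
        have : A ++ B = B ++ (A' ++ B) := by rw [← hA', List.append_assoc]
        rw [← this]
        exact hz1
      have h2 : z₂ <+: B ++ A' := by
        apply (pref_cancel (A := B)).mp
        rw [hz₂, hA']
        exact hz2
      have hlenA : A'.length + B.length = A.length := by
        rw [← hA']; simp [Nat.add_comm]
      have hIH1 : lcp (A' ++ B) (B ++ A') <+: A' ++ lcp (A' ++ B) (B ++ A') := by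
        apply ih; omega
      have hIH2 : lcp (B ++ A') (A' ++ B) <+: B ++ lcp (B ++ A') (A' ++ B) := by
        apply ih; omega
      rw [lcp_comm] at hIH2
      set z'' := lcp (A' ++ B) (B ++ A') with hz''
      have hz₂z'' : z₂ <+: z'' := prefix_lcp h1 h2
      have hA'z₂ : z₂ <+: A' ++ z₂ :=
        List.prefix_of_prefix_length_le (hz₂z''.trans hIH1) (pref_cancel.mpr hz₂z'') (by simp)
      have hBz₂ : z₂ <+: B ++ z₂ :=
        List.prefix_of_prefix_length_le (hz₂z''.trans hIH2) (pref_cancel.mpr hz₂z'') (by simp)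
      obtain ⟨m, hm⟩ := hBz₂
      -- goal : z <+: A ++ z ; z = B ++ z₂, A = B ++ A'
      rw [← hz₂, ← hA']
      have : B ++ A' ++ (B ++ z₂) = B ++ (A' ++ (z₂ ++ m)) := by
        rw [← hm]; simp [List.append_assoc]
      rw [this]
      apply pref_cancel.mpr
      rw [← List.append_assoc]
      exact hA'z₂.trans (List.prefix_append _ m)

end Key
section Morph
variable {σ : Type*}

lemma mapp_nil (h : Ltr → List σ) : mapp h [] = [] := rfl

lemma mapp_cons (h : Ltr → List σ) (x : Ltr) (u : List Ltr) :
    mapp h (x :: u) = h x ++ mapp h u := by simp [mapp]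

lemma mapp_append (h : Ltr → List σ) (u v : List Ltr) :
    mapp h (u ++ v) = mapp h u ++ mapp h v := by simp [mapp]

/-- `z_h` is a prefix of `h(x) ++ z_h` for each letter. -/
lemma zh_prefix_letter (h : Ltr → List σ) (x : Ltr) : zh h <+: h x ++ zh h := by
  cases x
  · exact key1 _ (h Ltr.a) (h Ltr.b) le_rfl
  · have := key1 _ (h Ltr.b) (h Ltr.a) le_rfl
    rw [lcp_comm] at this
    exact this

/-- `z_h` is a prefix of `h(u) ++ z_h` for every word. -/
lemma zh_prefix (h : Ltr → List σ) (u : List Ltr) : zh h <+: mapp h u ++ zh h := by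
  induction u with
  | nil => rw [mapp_nil]; simp
  | cons x u ih =>
    obtain ⟨m, hm⟩ := ih
    rw [mapp_cons, List.append_assoc, ← hm, ← List.append_assoc]
    exact (zh_prefix_letter h x).trans (List.prefix_append _ m)

end Morph
section Char
variable {σ : Type*}

lemma prefix_getElem? {u v : List σ} (h : u <+: v) {i : ℕ} (hi : i < u.length) :
    v[i]? = u[i]? := by
  obtain ⟨t, rfl⟩ := h
  exact List.getElem?_append_left hi

variable {h : Ltr → List σ} (hne : h Ltr.a ++ h Ltr.b ≠ h Ltr.b ++ h Ltr.a)

include hne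

lemma ha_ne_nil : h Ltr.a ≠ [] := by
  intro hh; apply hne; simp [hh]

lemma hb_ne_nil : h Ltr.b ≠ [] := by
  intro hh; apply hne; simp [hh]

lemma zh_lt_len : (zh h).length < (h Ltr.a).length + (h Ltr.b).length := by
  have h1 := lcp_prefix_left (h Ltr.a ++ h Ltr.b) (h Ltr.b ++ h Ltr.a)
  have h2 := lcp_prefix_right (h Ltr.a ++ h Ltr.b) (h Ltr.b ++ h Ltr.a)
  have hle : (zh h).length ≤ (h Ltr.a).length + (h Ltr.b).length := by
    simpa [zh] using h1.length_le
  rcases lt_or_eq_of_le hle with hlt | heq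
  · exact hlt
  · exfalso
    apply hne
    have e1 : zh h = h Ltr.a ++ h Ltr.b := h1.eq_of_length (by simpa [zh] using heq)
    have e2 : zh h = h Ltr.b ++ h Ltr.a := h2.eq_of_length (by simpa [zh, Nat.add_comm] using heq)
    rw [← e1, ← e2]

lemma char_after :
    ∀ (x : Ltr) (u : List Ltr), (mapp h (x :: u) ++ zh h)[(zh h).length]? =
      (match x with
        | Ltr.a => h Ltr.a ++ h Ltr.b
        | Ltr.b => h Ltr.b ++ h Ltr.a)[(zh h).length]? := by
  intro x u
  have hzAB := zh_lt_len hne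
  have hz1 : zh h <+: h Ltr.a ++ h Ltr.b := lcp_prefix_left _ _
  have hz2 : zh h <+: h Ltr.b ++ h Ltr.a := lcp_prefix_right _ _
  have key : ∀ (c d : Ltr), h c ≠ [] →
      (h c).length + (h d).length = (h Ltr.a).length + (h Ltr.b).length →
      zh h <+: h c ++ h d →
      zh h <+: h d ++ h c → (h c ++ (mapp h u ++ zh h))[(zh h).length]? =
        (h c ++ h d)[(zh h).length]? := by
    intro c d hcne hsum hzc hzd
    rcases lt_or_ge (zh h).length (h c).length with hlt | hle
    · rw [List.getElem?_append_left hlt, List.getElem?_append_left hlt]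
    · have hcpos : 0 < (h c).length := List.length_pos_iff.mpr hcne
      have hj : (zh h).length - (h c).length < (zh h).length := by
        have : (h c).length ≤ (zh h).length := hle
        omega
      rw [List.getElem?_append_right hle, List.getElem?_append_right hle]
      have hjz : (zh h).length - (h c).length < (zh h).length := hj
      rw [prefix_getElem? (zh_prefix h u) hjz]
      -- now : zh[j]? = (h d)[j]?
      have hjd : (zh h).length - (h c).length < (h d).length := by
        omega
      have : (zh h)[(zh h).length - (h c).length]? =
          (h d)[(zh h).length - (h c).length]? := by
        rw [← prefix_getElem? hzd hjz, List.getElem?_append_left hjd]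
      rw [this]
  cases x with
  | a =>
    rw [mapp_cons, List.append_assoc]
    exact key Ltr.a Ltr.b (ha_ne_nil hne) rfl hz1 hz2
  | b =>
    rw [mapp_cons, List.append_assoc]
    have hzAB' : (zh h).length < (h Ltr.b).length + (h Ltr.a).length := by omega
    exact key Ltr.b Ltr.a (hb_ne_nil hne) (Nat.add_comm _ _) hz2 hz1

lemma char_ne {x y : Ltr} (hxy : x ≠ y) (u v : List Ltr) :
    (mapp h (x :: u) ++ zh h)[(zh h).length]? ≠
      (mapp h (y :: v) ++ zh h)[(zh h).length]? := by
  have hzAB := zh_lt_len hne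
  have hlcp : (lcp (h Ltr.a ++ h Ltr.b) (h Ltr.b ++ h Ltr.a)).length <
      (h Ltr.a ++ h Ltr.b).length := by
    show (zh h).length < _
    simpa using hzAB
  have hlcp' : (lcp (h Ltr.a ++ h Ltr.b) (h Ltr.b ++ h Ltr.a)).length <
      (h Ltr.b ++ h Ltr.a).length := by
    show (zh h).length < _
    simp [Nat.add_comm]
    omega
  have hdiff := lcp_getElem?_ne hlcp hlcp'
  rw [char_after hne x u, char_after hne y v]
  cases x <;> cases y <;> simp_all [zh]
  · exact fun hh => hdiff hh.symm

end Char
section Deg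
variable {σ : Type*}

lemma npowL_succ (t : List σ) (n : ℕ) : npow t (n + 1) = t ++ npow t n := rfl

lemma npowL_add (t : List σ) (m n : ℕ) : npow t (m + n) = npow t m ++ npow t n := by
  unfold npow
  rw [← List.flatten_append, ← List.replicate_add]

lemma npowL_mono (t : List σ) {m n : ℕ} (hmn : m ≤ n) : npow t m <+: npow t n := by
  obtain ⟨k, rfl⟩ := Nat.exists_eq_add_of_le hmn
  rw [npowL_add]
  exact List.prefix_append _ _

lemma comm_npow {X t : List σ} (hx : X ++ t = t ++ X) (n : ℕ) :
    X ++ npow t n = npow t n ++ X := by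
  induction n with
  | zero => simp [npow]
  | succ n ihn =>
    rw [npowL_succ, ← List.append_assoc, hx, List.append_assoc, ihn, ← List.append_assoc]

variable {h : Ltr → List σ} (hcomm : h Ltr.a ++ h Ltr.b = h Ltr.b ++ h Ltr.a)

include hcomm

lemma zh_deg : zh h = h Ltr.a ++ h Ltr.b := by
  rw [zh, ← hcomm, lcp_self]

lemma deg_prefix_pow : ∀ u : List Ltr,
    mapp h u ++ zh h <+: npow (h Ltr.a ++ h Ltr.b) (u.length + 1) := by
  have commB : h Ltr.b ++ (h Ltr.a ++ h Ltr.b) = (h Ltr.a ++ h Ltr.b) ++ h Ltr.b := by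
    calc h Ltr.b ++ (h Ltr.a ++ h Ltr.b) = (h Ltr.b ++ h Ltr.a) ++ h Ltr.b := by
          rw [List.append_assoc]
    _ = (h Ltr.a ++ h Ltr.b) ++ h Ltr.b := by rw [← hcomm]
  have commA : h Ltr.a ++ (h Ltr.a ++ h Ltr.b) = (h Ltr.a ++ h Ltr.b) ++ h Ltr.a := by
    calc h Ltr.a ++ (h Ltr.a ++ h Ltr.b) = h Ltr.a ++ (h Ltr.b ++ h Ltr.a) := by rw [hcomm]
    _ = (h Ltr.a ++ h Ltr.b) ++ h Ltr.a := by rw [List.append_assoc]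
  intro u
  induction u with
  | nil =>
    rw [mapp_nil, List.nil_append, zh_deg hcomm]
    show h Ltr.a ++ h Ltr.b <+: npow (h Ltr.a ++ h Ltr.b) 1
    simp [npow]
  | cons x u ih =>
    rw [mapp_cons, List.append_assoc]
    have step : h x ++ npow (h Ltr.a ++ h Ltr.b) (u.length + 1) <+:
        npow (h Ltr.a ++ h Ltr.b) (u.length + 1 + 1) := by
      have e : npow (h Ltr.a ++ h Ltr.b) (u.length + 1 + 1) =
          (h Ltr.a ++ h Ltr.b) ++ npow (h Ltr.a ++ h Ltr.b) (u.length + 1) :=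
        npowL_succ _ _
      rw [e]
      have gena : ∀ P : List σ, h Ltr.b ++ P = P ++ h Ltr.b →
          (h Ltr.a ++ h Ltr.b) ++ P = h Ltr.a ++ (P ++ h Ltr.b) := by
        intro P hP
        rw [List.append_assoc, hP]
      have genb : ∀ P : List σ, h Ltr.a ++ P = P ++ h Ltr.a →
          (h Ltr.a ++ h Ltr.b) ++ P = h Ltr.b ++ (P ++ h Ltr.a) := by
        intro P hP
        rw [hcomm, List.append_assoc, hP]
      cases x with
      | a =>
        rw [gena _ (comm_npow commB _)]
        exact pref_cancel.mpr (List.prefix_append _ _)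
      | b =>
        rw [genb _ (comm_npow commA _)]
        exact pref_cancel.mpr (List.prefix_append _ _)
    exact (pref_cancel.mpr ih).trans step

lemma deg_comparable (u v : List Ltr) :
    mapp h u ++ zh h <+: mapp h v ++ zh h ∨ mapp h v ++ zh h <+: mapp h u ++ zh h := by
  have hu := (deg_prefix_pow hcomm u).trans
    (npowL_mono (h Ltr.a ++ h Ltr.b) (by omega : u.length + 1 ≤ max u.length v.length + 1))
  have hv := (deg_prefix_pow hcomm v).trans
    (npowL_mono (h Ltr.a ++ h Ltr.b) (by omega : v.length + 1 ≤ max u.length v.length + 1))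
  exact List.prefix_or_prefix_of_prefix hu hv

end Deg
section Main
variable {σ : Type*}

lemma list_trichotomy {α : Type*} : ∀ (u v : List α), u <+: v ∨ v <+: u ∨
    ∃ (p : List α) (x y : α) (s t : List α), x ≠ y ∧ u = p ++ x :: s ∧ v = p ++ y :: t := by
  intro u
  induction u with
  | nil => intro v; exact Or.inl (List.nil_prefix)
  | cons x xs ih =>
    intro v
    cases v with
    | nil => exact Or.inr (Or.inl (List.nil_prefix))
    | cons y ys =>
      by_cases hxy : x = y
      · subst hxy
        rcases ih ys with hc | hc | ⟨p, c, d, s, t, hcd, rfl, rfl⟩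
        · exact Or.inl (List.cons_prefix_cons.mpr ⟨rfl, hc⟩)
        · exact Or.inr (Or.inl (List.cons_prefix_cons.mpr ⟨rfl, hc⟩))
        · exact Or.inr (Or.inr ⟨x :: p, c, d, s, t, hcd, rfl, rfl⟩)
      · exact Or.inr (Or.inr ⟨[], x, y, xs, ys, hxy, rfl, rfl⟩)

lemma main_lemma (g h : Ltr → List σ) (hg : Marked g) (e e' : List Ltr)
    (he : MinEqBlock g h e) (he' : MinEqBlock g h e') (hhead : e.head? = e'.head?) :
    e = e' := by
  obtain ⟨hene, heq, hemin⟩ := he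
  obtain ⟨hene', heq', hemin'⟩ := he'
  rcases list_trichotomy e e' with hc | hc | ⟨p, x, y, s, t, hxy, rfl, rfl⟩
  · rcases hemin' e hc heq with h0 | h0
    · exact absurd h0 hene
    · exact h0
  · rcases hemin e' hc heq' with h0 | h0
    · exact absurd h0 hene'
    · exact h0.symm
  · exfalso
    -- same first letter forces p ≠ []
    have hpne : p ≠ [] := by
      rintro rfl
      simp only [List.nil_append, List.head?_cons] at hhead
      exact hxy (Option.some_injective _ hhead)
    set z := zh h with hzdef
    -- marked facts
    have hgx : g x ≠ [] := by cases x; exacts [hg.1, hg.2.1]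
    have hgy : g y ≠ [] := by cases y; exacts [hg.1, hg.2.1]
    have hgne : (g x).head? ≠ (g y).head? := by
      cases x <;> cases y
      · exact absurd rfl hxy
      · exact hg.2.2
      · exact fun hh => hg.2.2 hh.symm
      · exact absurd rfl hxy
    -- rewritten equations
    have EqE : (z ++ mapp g p) ++ mapp g (x :: s) = mapp h p ++ (mapp h (x :: s) ++ z) := by
      rw [List.append_assoc, ← mapp_append, heq, mapp_append, List.append_assoc]
    have EqE' : (z ++ mapp g p) ++ mapp g (y :: t) = mapp h p ++ (mapp h (y :: t) ++ z) := by
      rw [List.append_assoc, ← mapp_append, heq', mapp_append, List.append_assoc]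
    -- h(p) and z ++ g(p) are comparable
    have A1 : mapp h p <+: mapp h p ++ (mapp h (x :: s) ++ z) := List.prefix_append _ _
    have A2 : (z ++ mapp g p) <+: mapp h p ++ (mapp h (x :: s) ++ z) := by
      rw [← EqE]; exact List.prefix_append _ _
    have hcompar := List.prefix_or_prefix_of_prefix A1 A2
    -- reduce to case B: ∃ w, mapp h p ++ w = z ++ mapp g p
    have hcaseB : ∃ w, mapp h p ++ w = z ++ mapp g p := by
      rcases hcompar with hc2 | hc2
      · obtain ⟨w, hw⟩ := hc2; exact ⟨w, hw⟩
      · obtain ⟨r, hr⟩ := hc2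
        rcases eq_or_ne r ([] : List σ) with rfl | hrne
        · exact ⟨[], by rw [List.append_nil, ← List.append_nil (z ++ mapp g p), hr]⟩
        · exfalso
          have hx1 : mapp g (x :: s) = r ++ (mapp h (x :: s) ++ z) := by
            apply List.append_cancel_left (as := z ++ mapp g p)
            rw [EqE, ← hr, List.append_assoc]
          have hy1 : mapp g (y :: t) = r ++ (mapp h (y :: t) ++ z) := by
            apply List.append_cancel_left (as := z ++ mapp g p)
            rw [EqE', ← hr, List.append_assoc]
          have hhx : (g x).head? = r.head? := by
            have := congrArg List.head? hx1
            rwa [mapp_cons, List.head?_append_of_ne_nil _ hgx,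
              List.head?_append_of_ne_nil _ hrne] at this
          have hhy : (g y).head? = r.head? := by
            have := congrArg List.head? hy1
            rwa [mapp_cons, List.head?_append_of_ne_nil _ hgy,
              List.head?_append_of_ne_nil _ hrne] at this
          exact hgne (hhx.trans hhy.symm)
    obtain ⟨w, hw⟩ := hcaseB
    -- the two overflow equations
    have hP : w ++ mapp g (x :: s) = mapp h (x :: s) ++ z := by
      apply List.append_cancel_left (as := mapp h p)
      rw [← List.append_assoc, hw, EqE]
    have hQ : w ++ mapp g (y :: t) = mapp h (y :: t) ++ z := by
      apply List.append_cancel_left (as := mapp h p)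
      rw [← List.append_assoc, hw, EqE']
    set P := mapp h (x :: s) ++ z with hPdef
    set Q := mapp h (y :: t) ++ z with hQdef
    have hwP : w <+: P := ⟨mapp g (x :: s), hP⟩
    have hwQ : w <+: Q := ⟨mapp g (y :: t), hQ⟩
    have hlenP : w.length < P.length := by
      rw [← hP, List.length_append, mapp_cons, List.length_append]
      have := List.length_pos_iff.mpr hgx
      omega
    have hlenQ : w.length < Q.length := by
      rw [← hQ, List.length_append, mapp_cons, List.length_append]
      have := List.length_pos_iff.mpr hgy
      omega
    have hPw : P[w.length]? = (g x).head? := by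
      rw [← hP, List.getElem?_append_right le_rfl, Nat.sub_self, mapp_cons,
        ← List.head?_eq_getElem?, List.head?_append_of_ne_nil _ hgx]
    have hQw : Q[w.length]? = (g y).head? := by
      rw [← hQ, List.getElem?_append_right le_rfl, Nat.sub_self, mapp_cons,
        ← List.head?_eq_getElem?, List.head?_append_of_ne_nil _ hgy]
    have hne0 : P[w.length]? ≠ Q[w.length]? := by rw [hPw, hQw]; exact hgne
    by_cases hdeg : h Ltr.a ++ h Ltr.b = h Ltr.b ++ h Ltr.a
    · rcases deg_comparable hdeg (x :: s) (y :: t) with hc2 | hc2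
      · exact hne0 (prefix_getElem? hc2 hlenP).symm
      · exact hne0 (prefix_getElem? hc2 hlenQ)
    · have hzP : z <+: P := zh_prefix h (x :: s)
      have hzQ : z <+: Q := zh_prefix h (y :: t)
      have hchar : P[z.length]? ≠ Q[z.length]? := char_ne hdeg hxy s t
      rcases lt_trichotomy w.length z.length with hlt | heqL | hgt
      · exact hne0 ((prefix_getElem? hzP hlt).trans (prefix_getElem? hzQ hlt).symm)
      · have hwz : w = z := prefix_eq_of_length hwP hzP heqL
        have hpeq : z ++ mapp g p = mapp h p ++ z := by rw [← hw, hwz]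
        rcases hemin p ⟨x :: s, rfl⟩ hpeq with h0 | h0
        · exact hpne h0
        · have := congrArg List.length h0
          simp at this
      · exact hchar ((prefix_getElem? hwP hgt).trans (prefix_getElem? hwQ hgt).symm)

end Main
/-- The set of nonempty minimal words `e` with `z_h·g(e) = h(e)·z_h`
has at most two elements, and distinct such words start with different letters
(`g` marked). -/
theorem stmt_13 {σ : Type*} (g h : Ltr → List σ) (hg : Marked g) :
    (∃ p q : List Ltr, {e : List Ltr | MinEqBlock g h e} ⊆ {p, q}) ∧
    (∀ e e' : List Ltr, MinEqBlock g h e → MinEqBlock g h e' → e ≠ e' →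
      e.head? ≠ e'.head?) := by
  classical
  have part2 : ∀ e e' : List Ltr, MinEqBlock g h e → MinEqBlock g h e' → e ≠ e' →
      e.head? ≠ e'.head? := by
    intro e e' he he' hne hhead
    exact hne (main_lemma g h hg e e' he he' hhead)
  refine ⟨?_, part2⟩
  by_cases hpa : ∃ e : List Ltr, MinEqBlock g h e ∧ e.head? = some Ltr.a
  · by_cases hpb : ∃ e : List Ltr, MinEqBlock g h e ∧ e.head? = some Ltr.b
    · refine ⟨hpa.choose, hpb.choose, ?_⟩
      intro e he
      have hene : e ≠ [] := he.1
      cases e with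
      | nil => exact absurd rfl hene
      | cons c u =>
        cases c with
        | a =>
          left
          exact main_lemma g h hg _ _ he hpa.choose_spec.1
            (by rw [hpa.choose_spec.2]; rfl)
        | b =>
          right
          exact main_lemma g h hg _ _ he hpb.choose_spec.1
            (by rw [hpb.choose_spec.2]; rfl)
    · refine ⟨hpa.choose, hpa.choose, ?_⟩
      intro e he
      have hene : e ≠ [] := he.1
      cases e with
      | nil => exact absurd rfl hene
      | cons c u =>
        cases c with
        | a =>
          left
          exact main_lemma g h hg _ _ he hpa.choose_spec.1
            (by rw [hpa.choose_spec.2]; rfl)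
        | b => exact (hpb ⟨Ltr.b :: u, he, rfl⟩).elim
  · by_cases hpb : ∃ e : List Ltr, MinEqBlock g h e ∧ e.head? = some Ltr.b
    · refine ⟨hpb.choose, hpb.choose, ?_⟩
      intro e he
      have hene : e ≠ [] := he.1
      cases e with
      | nil => exact absurd rfl hene
      | cons c u =>
        cases c with
        | a => exact (hpa ⟨Ltr.a :: u, he, rfl⟩).elim
        | b =>
          left
          exact main_lemma g h hg _ _ he hpb.choose_spec.1
            (by rw [hpb.choose_spec.2]; rfl)
    · refine ⟨[], [], ?_⟩
      intro e he
      have hene : e ≠ [] := he.1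
      cases e with
      | nil => exact absurd rfl hene
      | cons c u =>
        cases c with
        | a => exact (hpa ⟨Ltr.a :: u, he, rfl⟩).elim
        | b => exact (hpb ⟨Ltr.b :: u, he, rfl⟩).elim
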